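/- Let Λ, λ, μ_f, e, L be positive reals with μ_f < λ, and let z_T ≥ z_C with 0 ≤ z_T − z_C ≤ Λ·e·L/((λ−μ_f)(e+L)). Set R_s = (z_T − z_C)·Λ·μ_f/λ and R_d = (z_T − z_C)·Λ·μ_f/λ + ((z_T − z_C)²·μ_f(e+L)/(2eL))·(1 − μ_f/λ)². Then R_s ≥ (2/(3 − μ_f/λ))·R_d, and consequently R_s ≥ (1/2)·R_d. -/

import Mathlib

/-- Revenue guarantee for the static toll `zT - zC` in an urban system
governed by a triangular MFD with maximum throughput `muf`. -/
theorem mfd_static_revenue_guarantee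
    (Lam lam muf e L zT zC : ℝ)
    (hLam : 0 < Lam) (hlam : 0 < lam) (hmuf : 0 < muf) (he : 0 < e) (hL : 0 < L)
    (hmuflam : muf < lam) (hz : zC ≤ zT)
    (hreg1 : 0 ≤ zT - zC)
    (hreg2 : zT - zC ≤ Lam * e * L / ((lam - muf) * (e + L))) :
    (zT - zC) * Lam * muf / lam ≥
      (2 / (3 - muf / lam)) *
        ((zT - zC) * Lam * muf / lam +
          ((zT - zC) ^ 2 * muf * (e + L) / (2 * e * L)) * (1 - muf / lam) ^ 2) ∧
    (zT - zC) * Lam * muf / lam ≥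
      (1 / 2) *
        ((zT - zC) * Lam * muf / lam +
          ((zT - zC) ^ 2 * muf * (e + L) / (2 * e * L)) * (1 - muf / lam) ^ 2) := by
  have hlm : 0 < lam - muf := by linarith
  have heL : 0 < e + L := by linarith
  have hden : 0 < (lam - muf) * (e + L) := mul_pos hlm heL
  have hkey : (zT - zC) * ((lam - muf) * (e + L)) ≤ Lam * e * L :=
    (le_div_iff₀ hden).mp hreg2
  have hr : muf / lam < 1 := (div_lt_one hlam).mpr hmuflam
  have hr0 : 0 < muf / lam := div_pos hmuf hlam
  have h3r : 0 < 3 - muf / lam := by linarith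
  have hRd : 0 ≤ (zT - zC) * Lam * muf / lam +
      ((zT - zC) ^ 2 * muf * (e + L) / (2 * e * L)) * (1 - muf / lam) ^ 2 := by
    have h1 : 0 ≤ (zT - zC) * Lam * muf / lam := by positivity
    have h2 : 0 ≤ ((zT - zC) ^ 2 * muf * (e + L) / (2 * e * L)) * (1 - muf / lam) ^ 2 := by
      positivity
    linarith
  have hfirst : (zT - zC) * Lam * muf / lam ≥
      (2 / (3 - muf / lam)) *
        ((zT - zC) * Lam * muf / lam +
          ((zT - zC) ^ 2 * muf * (e + L) / (2 * e * L)) * (1 - muf / lam) ^ 2) := by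
    rw [ge_iff_le, div_mul_eq_mul_div, div_le_iff₀ h3r]
    
    field_simp
    nlinarith [mul_le_mul_of_nonneg_left hkey (mul_nonneg hreg1 hlm.le), mul_le_mul_of_nonneg_left hkey
      (mul_nonneg (mul_nonneg (mul_nonneg hmuf.le hreg1) hlm.le)
        (by positivity : (0:ℝ) ≤ lam^3))]
  refine ⟨hfirst, ?_⟩
  have h2 : (1/2 : ℝ) ≤ 2 / (3 - muf / lam) := by
    rw [le_div_iff₀ h3r]; linarith
  calc (1/2 : ℝ) * _ ≤ (2 / (3 - muf / lam)) * _ := by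
        exact mul_le_mul_of_nonneg_right h2 hRd
    _ ≤ _ := hfirst
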